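/- Let a > 0. For every R > 0 there exists a constant M > 0 such that |C_a(u,w)| ≤ M/u for all u ≥ 1 and all complex w with |w| ≤ R. -/

import Mathlib

open MeasureTheory Complex Set Real Filter Topology

noncomputable section

/-- `C t` is, for each `t > 0`, the entire extension of
`w ↦ 2∫_a^∞ cos(2πut) t^(w−1) dt` (defined for `Re(w) < 0`). -/
def IsCaExtension (a : ℝ) (C : ℝ → ℂ → ℂ) : Prop :=
  ∀ u : ℝ, 0 < u → Differentiable ℂ (C u) ∧
    ∀ w : ℂ, w.re < 0 →
      C u w = 2 * ∫ t in Ioi a, (Real.cos (2 * π * u * t) : ℂ) * (t : ℂ) ^ (w - 1)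

lemma integrableTrig {a : ℝ} (ha : 0 < a) {φ : ℝ → ℝ} (hφ : Continuous φ)
    (hφ1 : ∀ t, |φ t| ≤ 1) {s : ℂ} (hs : s.re < -1) :
    IntegrableOn (fun t : ℝ => (φ t : ℂ) * (t : ℂ) ^ s) (Ioi a) := by
  have hint : IntegrableOn (fun t : ℝ => (t : ℂ) ^ s) (Ioi a) :=
    integrableOn_Ioi_cpow_of_lt hs ha
  refine Integrable.mono' hint.norm ?_ ?_
  · exact ((Complex.continuous_ofReal.comp hφ).aestronglyMeasurable.restrict).mul
      hint.aestronglyMeasurable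
  · refine Filter.Eventually.of_forall fun t => ?_
    rw [norm_mul]
    calc ‖((φ t : ℂ))‖ * ‖(t:ℂ)^s‖ ≤ 1 * ‖(t:ℂ)^s‖ := by
          apply mul_le_mul_of_nonneg_right _ (norm_nonneg _)
          rw [Complex.norm_real]; exact hφ1 t
      _ = ‖(t:ℂ)^s‖ := one_mul _

lemma cpow_deriv {t : ℝ} (ht : 0 < t) (s : ℂ) :
    HasDerivAt (fun y : ℝ => (y : ℂ) ^ s) (s * (t : ℂ) ^ (s - 1)) t := by
  have h := ((hasDerivAt_id ((t : ℝ) : ℂ)).cpow_const (c := s)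
    (Or.inl (by simpa using ht))).comp_ofReal
  simpa using h

lemma tendsto_trig_cpow {φ : ℝ → ℝ} (hφ1 : ∀ t, |φ t| ≤ 1) {s : ℂ} (hs : s.re < 0) (z : ℂ) :
    Tendsto (fun t : ℝ => (φ t : ℂ) * (t : ℂ) ^ s * z) atTop (𝓝 0) := by
  have h1 : Tendsto (fun t : ℝ => t ^ s.re * ‖z‖) atTop (𝓝 (0 * ‖z‖)) := by
    have := tendsto_rpow_neg_atTop (y := -s.re) (by linarith)
    simpa using this.mul_const ‖z‖
  rw [zero_mul] at h1
  refine squeeze_zero_norm' ?_ h1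
  filter_upwards [eventually_gt_atTop 0] with t ht
  rw [norm_mul, norm_mul, Complex.norm_real,
    Complex.norm_cpow_eq_rpow_re_of_pos ht]
  have : |φ t| * t ^ s.re ≤ 1 * t ^ s.re :=
    mul_le_mul_of_nonneg_right (hφ1 t) (Real.rpow_nonneg ht.le _)
  rw [Real.norm_eq_abs]
  nlinarith [norm_nonneg z, Real.rpow_nonneg ht.le s.re, abs_nonneg (φ t)]

lemma ibp_cos {a : ℝ} (ha : 0 < a) {u : ℝ} (hu : 0 < u) {w : ℂ} (hw : w.re < 0) :
    ∫ t in Ioi a, (Real.cos (2 * π * u * t) : ℂ) * (t : ℂ) ^ (w - 1)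
      = -((Real.sin (2 * π * u * a) : ℂ) * (a : ℂ) ^ (w - 1) * ((2 * π * u : ℝ) : ℂ)⁻¹)
        - (w - 1) * ((2 * π * u : ℝ) : ℂ)⁻¹ *
          ∫ t in Ioi a, (Real.sin (2 * π * u * t) : ℂ) * (t : ℂ) ^ (w - 2) := by
  set c : ℝ := 2 * π * u with hcdef
  have hc : 0 < c := by positivity
  have hre1 : (w - 1).re < -1 := by simp [Complex.sub_re]; linarith
  have hre2 : (w - 2).re < -1 := by
    have : (w - 2).re = w.re - 2 := by simp [Complex.sub_re]
    linarith [this]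
  have hint1 : IntegrableOn (fun t : ℝ => (Real.cos (c * t) : ℂ) * (t : ℂ) ^ (w - 1)) (Ioi a) :=
    integrableTrig ha (Real.continuous_cos.comp (continuous_const.mul continuous_id))
      (fun t => abs_cos_le_one _) hre1
  have hint2 : IntegrableOn (fun t : ℝ => (Real.sin (c * t) : ℂ) * (t : ℂ) ^ (w - 2)) (Ioi a) :=
    integrableTrig ha (Real.continuous_sin.comp (continuous_const.mul continuous_id))
      (fun t => abs_sin_le_one _) hre2
  set f : ℝ → ℂ := fun t => (Real.sin (c * t) : ℂ) * (t : ℂ) ^ (w - 1) * ((c : ℝ) : ℂ)⁻¹ with hf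
  have hderiv : ∀ t ∈ Ioi a, HasDerivAt f
      ((Real.cos (c * t) : ℂ) * (t : ℂ) ^ (w - 1)
        + (w - 1) * ((c : ℝ) : ℂ)⁻¹ * ((Real.sin (c * t) : ℂ) * (t : ℂ) ^ (w - 2))) t := by
    intro t htmem
    have ht0 : 0 < t := ha.trans htmem
    have h1 : HasDerivAt (fun y : ℝ => Real.sin (c * y)) (Real.cos (c * t) * c) t := by
      have h0 : HasDerivAt (fun y : ℝ => c * y) c t := by
        simpa using (hasDerivAt_id t).const_mul c
      exact (Real.hasDerivAt_sin (c * t)).comp t h0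
    have h3 := ((h1.ofReal_comp.mul (cpow_deriv ht0 (w - 1))).mul_const (((c : ℝ) : ℂ)⁻¹))
    refine h3.congr_deriv ?_
    rw [show w - 1 - 1 = w - 2 by ring]
    have hcne : ((c : ℝ) : ℂ) ≠ 0 := by exact_mod_cast hc.ne'
    push_cast
    field_simp
  have htend : Tendsto f atTop (𝓝 0) :=
    tendsto_trig_cpow (φ := fun t => Real.sin (c * t)) (fun t => abs_sin_le_one _)
      (by linarith [hre1] : (w - 1).re < 0) _
  have hcont : ContinuousWithinAt f (Ici a) a := by
    apply ContinuousAt.continuousWithinAt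
    exact ((Complex.continuous_ofReal.comp
      (Real.continuous_sin.comp (continuous_const.mul continuous_id))).continuousAt.mul
      (continuousAt_ofReal_cpow_const a (w - 1) (Or.inr ha.ne'))).mul continuousAt_const
  have f'int : IntegrableOn (fun t : ℝ =>
      (Real.cos (c * t) : ℂ) * (t : ℂ) ^ (w - 1)
        + (w - 1) * ((c : ℝ) : ℂ)⁻¹ * ((Real.sin (c * t) : ℂ) * (t : ℂ) ^ (w - 2))) (Ioi a) :=
    hint1.add (hint2.const_mul _)
  have key := integral_Ioi_of_hasDerivAt_of_tendsto hcont hderiv f'int htend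
  rw [integral_add hint1 (hint2.const_mul _), integral_const_mul] at key
  have hfa : f a = (Real.sin (c * a) : ℂ) * (a : ℂ) ^ (w - 1) * ((c : ℝ) : ℂ)⁻¹ := rfl
  rw [hfa, zero_sub] at key
  linear_combination key

lemma ibp_sin {a : ℝ} (ha : 0 < a) {u : ℝ} (hu : 0 < u) {w : ℂ} (hw : w.re < 0) :
    ∫ t in Ioi a, (Real.sin (2 * π * u * t) : ℂ) * (t : ℂ) ^ (w - 2)
      = (Real.cos (2 * π * u * a) : ℂ) * (a : ℂ) ^ (w - 2) * ((2 * π * u : ℝ) : ℂ)⁻¹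
        + (w - 2) * ((2 * π * u : ℝ) : ℂ)⁻¹ *
          ∫ t in Ioi a, (Real.cos (2 * π * u * t) : ℂ) * (t : ℂ) ^ (w - 3) := by
  set c : ℝ := 2 * π * u with hcdef
  have hc : 0 < c := by positivity
  have hre2 : (w - 2).re < -1 := by
    have : (w - 2).re = w.re - 2 := by simp [Complex.sub_re]
    linarith [this]
  have hre3 : (w - 3).re < -1 := by
    have : (w - 3).re = w.re - 3 := by simp [Complex.sub_re]
    linarith [this]
  have hint2 : IntegrableOn (fun t : ℝ => (Real.sin (c * t) : ℂ) * (t : ℂ) ^ (w - 2)) (Ioi a) :=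
    integrableTrig ha (Real.continuous_sin.comp (continuous_const.mul continuous_id))
      (fun t => abs_sin_le_one _) hre2
  have hint3 : IntegrableOn (fun t : ℝ => (Real.cos (c * t) : ℂ) * (t : ℂ) ^ (w - 3)) (Ioi a) :=
    integrableTrig ha (Real.continuous_cos.comp (continuous_const.mul continuous_id))
      (fun t => abs_cos_le_one _) hre3
  set f : ℝ → ℂ := fun t => ((-Real.cos (c * t) : ℝ) : ℂ) * (t : ℂ) ^ (w - 2) * ((c : ℝ) : ℂ)⁻¹
    with hf
  have hderiv : ∀ t ∈ Ioi a, HasDerivAt f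
      ((Real.sin (c * t) : ℂ) * (t : ℂ) ^ (w - 2)
        + (-((w - 2) * ((c : ℝ) : ℂ)⁻¹)) * ((Real.cos (c * t) : ℂ) * (t : ℂ) ^ (w - 3))) t := by
    intro t htmem
    have ht0 : 0 < t := ha.trans htmem
    have h1 : HasDerivAt (fun y : ℝ => -Real.cos (c * y)) (Real.sin (c * t) * c) t := by
      have h0 : HasDerivAt (fun y : ℝ => c * y) c t := by
        simpa using (hasDerivAt_id t).const_mul c
      have h1' := ((Real.hasDerivAt_cos (c * t)).comp t h0).neg
      exact h1'.congr_deriv (by ring)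
    have h3 := ((h1.ofReal_comp.mul (cpow_deriv ht0 (w - 2))).mul_const (((c : ℝ) : ℂ)⁻¹))
    refine h3.congr_deriv ?_
    rw [show w - 2 - 1 = w - 3 by ring]
    have hcne : ((c : ℝ) : ℂ) ≠ 0 := by exact_mod_cast hc.ne'
    push_cast
    field_simp
  have htend : Tendsto f atTop (𝓝 0) :=
    tendsto_trig_cpow (φ := fun t => -Real.cos (c * t))
      (fun t => by rw [abs_neg]; exact abs_cos_le_one _)
      (by linarith [hre2] : (w - 2).re < 0) _
  have hcont : ContinuousWithinAt f (Ici a) a := by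
    apply ContinuousAt.continuousWithinAt
    exact ((Complex.continuous_ofReal.comp
      (Real.continuous_cos.comp (continuous_const.mul continuous_id)).neg).continuousAt.mul
      (continuousAt_ofReal_cpow_const a (w - 2) (Or.inr ha.ne'))).mul continuousAt_const
  have f'int : IntegrableOn (fun t : ℝ =>
      (Real.sin (c * t) : ℂ) * (t : ℂ) ^ (w - 2)
        + (-((w - 2) * ((c : ℝ) : ℂ)⁻¹)) * ((Real.cos (c * t) : ℂ) * (t : ℂ) ^ (w - 3)))
      (Ioi a) := hint2.add (hint3.const_mul _)
  have key := integral_Ioi_of_hasDerivAt_of_tendsto hcont hderiv f'int htend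
  rw [integral_add hint2 (hint3.const_mul _), integral_const_mul] at key
  have hfa : f a = ((-Real.cos (c * a) : ℝ) : ℂ) * (a : ℂ) ^ (w - 2) * ((c : ℝ) : ℂ)⁻¹ := rfl
  rw [hfa, zero_sub] at key
  push_cast at key ⊢
  linear_combination key

lemma diff_cpow_aux {a : ℝ} (ha : 0 < a) (k : ℂ) :
    Differentiable ℂ (fun w : ℂ => (a : ℂ) ^ (w - k)) := by
  have h : ∀ w : ℂ, (a : ℂ) ^ (w - k) = Complex.exp (Complex.log a * (w - k)) := fun w =>
    Complex.cpow_def_of_ne_zero (by exact_mod_cast ha.ne') _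
  rw [show (fun w : ℂ => (a : ℂ) ^ (w - k))
      = fun w : ℂ => Complex.exp (Complex.log a * (w - k)) from funext h]
  exact Complex.differentiable_exp.comp ((differentiable_id.sub_const k).const_mul _)

lemma rec_formula {a : ℝ} (ha : 0 < a) {C : ℝ → ℂ → ℂ} (hC : IsCaExtension a C)
    {u : ℝ} (hu : 0 < u) (w : ℂ) :
    C u w = -(2 * (Real.sin (2 * π * u * a) : ℂ) * (a : ℂ) ^ (w - 1) * ((2 * π * u : ℝ) : ℂ)⁻¹)
      - 2 * (w - 1) * (Real.cos (2 * π * u * a) : ℂ) * (a : ℂ) ^ (w - 2)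
          * (((2 * π * u : ℝ) : ℂ)⁻¹ * ((2 * π * u : ℝ) : ℂ)⁻¹)
      - (w - 1) * (w - 2) * (((2 * π * u : ℝ) : ℂ)⁻¹ * ((2 * π * u : ℝ) : ℂ)⁻¹) * C u (w - 2) := by
  obtain ⟨hdiff, hrepr⟩ := hC u hu
  -- the two sides as functions of w
  set G : ℂ → ℂ := fun w =>
    -(2 * (Real.sin (2 * π * u * a) : ℂ) * (a : ℂ) ^ (w - 1) * ((2 * π * u : ℝ) : ℂ)⁻¹)
      - 2 * (w - 1) * (Real.cos (2 * π * u * a) : ℂ) * (a : ℂ) ^ (w - 2)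
          * (((2 * π * u : ℝ) : ℂ)⁻¹ * ((2 * π * u : ℝ) : ℂ)⁻¹)
      - (w - 1) * (w - 2) * (((2 * π * u : ℝ) : ℂ)⁻¹ * ((2 * π * u : ℝ) : ℂ)⁻¹) * C u (w - 2)
    with hG
  have hGdiff : Differentiable ℂ G := by
    apply Differentiable.sub
    apply Differentiable.sub
    · exact (((differentiable_const _).mul (diff_cpow_aux ha 1)).mul
        (differentiable_const _)).neg
    · exact ((((differentiable_id.sub_const 1).const_mul _).mul
        (differentiable_const _)).mul (diff_cpow_aux ha 2)).mul (differentiable_const _)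
    · exact ((((differentiable_id.sub_const 1).mul (differentiable_id.sub_const 2)).mul
        (differentiable_const _)).mul (hdiff.comp (differentiable_id.sub_const 2)))
  have hopen : IsOpen {z : ℂ | z.re < 0} := isOpen_lt Complex.continuous_re continuous_const
  have hagree : ∀ z : ℂ, z.re < 0 → C u z = G z := by
    intro z hz
    have hz2 : (z - 2).re < 0 := by
      have : (z - 2).re = z.re - 2 := by simp [Complex.sub_re]
      linarith [this]
    have e1 := hrepr z hz
    have e2 := hrepr (z - 2) hz2
    rw [show z - 2 - 1 = z - 3 from by ring] at e2
    have e3 := ibp_cos ha hu hz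
    have e4 := ibp_sin ha hu hz
    rw [hG]
    simp only
    linear_combination e1 + 2 * e3 - 2 * ((z - 1) * ((2 * π * u : ℝ) : ℂ)⁻¹) * e4
      + ((z-1) * (z-2) * (((2 * π * u : ℝ) : ℂ)⁻¹ * ((2 * π * u : ℝ) : ℂ)⁻¹)) * e2
  have := AnalyticOnNhd.eq_of_eventuallyEq (𝕜 := ℂ)
    (analyticOnNhd_univ_iff_differentiable.2 hdiff)
    (analyticOnNhd_univ_iff_differentiable.2 hGdiff)
    (z₀ := -1)
    (Filter.eventually_of_mem (hopen.mem_nhds (by norm_num : (-1 : ℂ).re < 0))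
      (fun z hz => hagree z hz))
  exact congrFun this w

lemma rpow_bound {a : ℝ} (ha : 0 < a) {x c : ℝ} (hx : |x| ≤ c) :
    a ^ x ≤ max a a⁻¹ ^ c := by
  have hm0 : 0 < max a a⁻¹ := lt_max_of_lt_left ha
  have hm1 : (1 : ℝ) ≤ max a a⁻¹ := by
    rcases le_total a 1 with h | h
    · exact le_max_of_le_right ((one_le_inv₀ ha).2 h)
    · exact le_max_of_le_left h
  obtain ⟨hx1, hx2⟩ := abs_le.mp hx
  rcases le_total 0 x with h0 | h0
  · calc a ^ x ≤ max a a⁻¹ ^ x := Real.rpow_le_rpow ha.le (le_max_left _ _) h0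
      _ ≤ max a a⁻¹ ^ c := Real.rpow_le_rpow_of_exponent_le hm1 hx2
  · have : a ^ x = a⁻¹ ^ (-x) := by
      rw [Real.inv_rpow ha.le, ← Real.rpow_neg ha.le, neg_neg]
    rw [this]
    calc a⁻¹ ^ (-x) ≤ max a a⁻¹ ^ (-x) :=
        Real.rpow_le_rpow (inv_nonneg.2 ha.le) (le_max_right _ _) (by linarith)
      _ ≤ max a a⁻¹ ^ c := Real.rpow_le_rpow_of_exponent_le hm1 (by linarith)

lemma triv_bound {a : ℝ} (ha : 0 < a) {C : ℝ → ℂ → ℂ} (hC : IsCaExtension a C)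
    {u : ℝ} (hu : 0 < u) {w : ℂ} (hw : w.re ≤ -1) :
    ‖C u w‖ ≤ 2 * a ^ w.re := by
  obtain ⟨-, hrepr⟩ := hC u hu
  rw [hrepr w (by linarith)]
  have hwre : (w - 1).re < -1 := by
    have : (w - 1).re = w.re - 1 := by simp [Complex.sub_re]
    linarith [this]
  have hint : IntegrableOn (fun t : ℝ => t ^ (w.re - 1)) (Ioi a) :=
    integrableOn_Ioi_rpow_of_lt (by linarith) ha
  have hbound : ‖∫ t in Ioi a, (Real.cos (2 * π * u * t) : ℂ) * (t : ℂ) ^ (w - 1)‖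
      ≤ ∫ t in Ioi a, t ^ (w.re - 1) := by
    refine norm_integral_le_of_norm_le hint ?_
    refine (ae_restrict_iff' measurableSet_Ioi).2 (Filter.Eventually.of_forall fun t ht => ?_)
    have ht0 : 0 < t := ha.trans ht
    rw [norm_mul, Complex.norm_real, Complex.norm_cpow_eq_rpow_re_of_pos ht0]
    have : (w - 1).re = w.re - 1 := by simp [Complex.sub_re]
    rw [this]
    calc |Real.cos (2 * π * u * t)| * t ^ (w.re - 1)
        ≤ 1 * t ^ (w.re - 1) :=
          mul_le_mul_of_nonneg_right (abs_cos_le_one _) (Real.rpow_nonneg ht0.le _)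
      _ = t ^ (w.re - 1) := one_mul _
  have hval : ∫ t in Ioi a, t ^ (w.re - 1) = -a ^ (w.re - 1 + 1) / (w.re - 1 + 1) :=
    integral_Ioi_rpow_of_lt (by linarith) ha
  rw [norm_mul] at *
  have h2 : ‖(2 : ℂ)‖ = 2 := by norm_num
  rw [h2]
  have hval' : ∫ t in Ioi a, t ^ (w.re - 1) = a ^ w.re / (-w.re) := by
    rw [hval, show w.re - 1 + 1 = w.re by ring]; ring
  have hle : ‖∫ t in Ioi a, (Real.cos (2 * π * u * t) : ℂ) * (t : ℂ) ^ (w - 1)‖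
      ≤ a ^ w.re / (-w.re) := by rw [← hval']; exact hbound
  have hfin : a ^ w.re / (-w.re) ≤ a ^ w.re :=
    div_le_self (Real.rpow_nonneg ha.le _) (by linarith)
  nlinarith [norm_nonneg (∫ t in Ioi a, (Real.cos (2 * π * u * t) : ℂ) * (t : ℂ) ^ (w - 1))]

lemma step_bound {a : ℝ} (ha : 0 < a) {C : ℝ → ℂ → ℂ} (hC : IsCaExtension a C)
    {B D : ℝ} (hB : 0 < B) (hD0 : 0 ≤ D)
    {u : ℝ} (hu : 1 ≤ u) {w : ℂ} (hwB : ‖w‖ ≤ B) (hD : ‖C u (w - 2)‖ ≤ D) :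
    ‖C u w‖ ≤ (2 * max a a⁻¹ ^ (B + 3) * (B + 2) + (B + 1) * (B + 2) * D) / u := by
  have hu0 : (0 : ℝ) < u := lt_of_lt_of_le one_pos hu
  set K := max a a⁻¹ ^ (B + 3) with hKdef
  have hK0 : 0 < K := Real.rpow_pos_of_pos (lt_max_of_lt_left ha) _
  have hre : |w.re| ≤ B := by
    calc |w.re| ≤ ‖w‖ := Complex.abs_re_le_norm w
      _ = ‖w‖ := rfl
      _ ≤ B := hwB
  obtain ⟨hreL, hreR⟩ := abs_le.mp hre
  have hA1 : ‖(a : ℂ) ^ (w - 1)‖ ≤ K := by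
    rw [Complex.norm_cpow_eq_rpow_re_of_pos ha,
      show (w - 1).re = w.re - 1 by simp [Complex.sub_re]]
    exact rpow_bound ha (by rw [abs_le]; constructor <;> linarith)
  have hA2 : ‖(a : ℂ) ^ (w - 2)‖ ≤ K := by
    rw [Complex.norm_cpow_eq_rpow_re_of_pos ha,
      show (w - 2).re = w.re - 2 by simp [Complex.sub_re]]
    exact rpow_bound ha (by rw [abs_le]; constructor <;> linarith)
  have hIle : ‖((2 * π * u : ℝ) : ℂ)⁻¹‖ ≤ u⁻¹ := by
    rw [norm_inv, Complex.norm_real, Real.norm_eq_abs, abs_of_pos (by positivity)]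
    exact inv_anti₀ hu0 (by nlinarith [Real.pi_gt_three])
  have hsin : ‖((Real.sin (2 * π * u * a) : ℝ) : ℂ)‖ ≤ 1 := by
    rw [Complex.norm_real, Real.norm_eq_abs]; exact abs_sin_le_one _
  have hcos : ‖((Real.cos (2 * π * u * a) : ℝ) : ℂ)‖ ≤ 1 := by
    rw [Complex.norm_real, Real.norm_eq_abs]; exact abs_cos_le_one _
  have h2c : ‖(2 : ℂ)‖ = 2 := by norm_num
  have hw1 : ‖w - 1‖ ≤ B + 1 := by
    calc ‖w - 1‖ ≤ ‖w‖ + ‖(1 : ℂ)‖ := norm_sub_le _ _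
      _ ≤ B + 1 := by rw [norm_one]; linarith
  have hw2 : ‖w - 2‖ ≤ B + 2 := by
    calc ‖w - 2‖ ≤ ‖w‖ + ‖(2 : ℂ)‖ := norm_sub_le _ _
      _ ≤ B + 2 := by rw [h2c]; linarith
  rw [rec_formula ha hC hu0 w]
  set I := ((2 * π * u : ℝ) : ℂ)⁻¹ with hIdef
  set S := ((Real.sin (2 * π * u * a) : ℝ) : ℂ)
  set Co := ((Real.cos (2 * π * u * a) : ℝ) : ℂ)
  have hT1 : ‖-(2 * S * (a : ℂ) ^ (w - 1) * I)‖ ≤ 2 * 1 * K * u⁻¹ := by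
    rw [norm_neg, norm_mul, norm_mul, norm_mul, h2c]
    gcongr
  have hT2 : ‖2 * (w - 1) * Co * (a : ℂ) ^ (w - 2) * (I * I)‖
      ≤ 2 * (B + 1) * 1 * K * (u⁻¹ * u⁻¹) := by
    rw [norm_mul, norm_mul, norm_mul, norm_mul, norm_mul, h2c]
    gcongr
  have hT3 : ‖(w - 1) * (w - 2) * (I * I) * C u (w - 2)‖
      ≤ (B + 1) * (B + 2) * (u⁻¹ * u⁻¹) * D := by
    rw [norm_mul, norm_mul, norm_mul, norm_mul]
    gcongr
  have tri : ‖-(2 * S * (a : ℂ) ^ (w - 1) * I)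
        - 2 * (w - 1) * Co * (a : ℂ) ^ (w - 2) * (I * I)
        - (w - 1) * (w - 2) * (I * I) * C u (w - 2)‖
      ≤ ‖-(2 * S * (a : ℂ) ^ (w - 1) * I)‖
        + ‖2 * (w - 1) * Co * (a : ℂ) ^ (w - 2) * (I * I)‖
        + ‖(w - 1) * (w - 2) * (I * I) * C u (w - 2)‖ := by
    refine (norm_sub_le _ _).trans ?_
    have := norm_sub_le (-(2 * S * (a : ℂ) ^ (w - 1) * I))
      (2 * (w - 1) * Co * (a : ℂ) ^ (w - 2) * (I * I))
    linarith
  have hv0 : (0 : ℝ) < u⁻¹ := by positivity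
  have hv1 : u⁻¹ ≤ 1 := inv_le_one_of_one_le₀ hu
  have hvv : u⁻¹ * u⁻¹ ≤ u⁻¹ := by nlinarith
  have final : 2 * 1 * K * u⁻¹ + 2 * (B + 1) * 1 * K * (u⁻¹ * u⁻¹)
      + (B + 1) * (B + 2) * (u⁻¹ * u⁻¹) * D
      ≤ (2 * K * (B + 2) + (B + 1) * (B + 2) * D) / u := by
    rw [div_eq_mul_inv]
    nlinarith [mul_le_mul_of_nonneg_left hvv (show (0:ℝ) ≤ 2 * (B + 1) * K by positivity),
      mul_le_mul_of_nonneg_left hvv (show (0:ℝ) ≤ (B + 1) * (B + 2) * D by positivity)]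
  calc _ ≤ _ := tri
    _ ≤ 2 * 1 * K * u⁻¹ + 2 * (B + 1) * 1 * K * (u⁻¹ * u⁻¹)
        + (B + 1) * (B + 2) * (u⁻¹ * u⁻¹) * D := by linarith
    _ ≤ _ := final

lemma bound_ind {a : ℝ} (ha : 0 < a) {C : ℝ → ℂ → ℂ} (hC : IsCaExtension a C) :
    ∀ n : ℕ, ∀ B : ℝ, 0 < B → ∃ M : ℝ, 0 < M ∧ ∀ u : ℝ, 1 ≤ u → ∀ w : ℂ,
      ‖w‖ ≤ B → w.re ≤ -1 + 2 * n → ‖C u w‖ ≤ M / u := by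
  intro n
  induction n with
  | zero =>
    intro B hB
    refine ⟨2 * max a a⁻¹ ^ (B + 3) * (B + 2)
      + (B + 1) * (B + 2) * (2 * max a a⁻¹ ^ (B + 3)),
      by positivity, fun u hu w hwB hwre => ?_⟩
    have hwre' : w.re ≤ -1 := by push_cast at hwre; linarith
    apply step_bound ha hC hB (by positivity) hu hwB
    have h1 : (w - 2).re ≤ -1 := by
      rw [show (w - 2).re = w.re - 2 by simp [Complex.sub_re]]; linarith
    refine (triv_bound ha hC (lt_of_lt_of_le one_pos hu) h1).trans ?_
    have hre : |w.re| ≤ B := by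
      calc |w.re| ≤ ‖w‖ := Complex.abs_re_le_norm w
        _ = ‖w‖ := rfl
        _ ≤ B := hwB
    obtain ⟨hreL, hreR⟩ := abs_le.mp hre
    have : a ^ (w - 2).re ≤ max a a⁻¹ ^ (B + 3) := by
      rw [show (w - 2).re = w.re - 2 by simp [Complex.sub_re]]
      exact rpow_bound ha (by rw [abs_le]; constructor <;> linarith)
    linarith
  | succ n ih =>
    intro B hB
    obtain ⟨M', hM'0, hM'⟩ := ih (B + 2) (by linarith)
    refine ⟨2 * max a a⁻¹ ^ (B + 3) * (B + 2) + (B + 1) * (B + 2) * M',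
      by positivity, fun u hu w hwB hwre => ?_⟩
    apply step_bound ha hC hB hM'0.le hu hwB
    have hw2 : ‖w - 2‖ ≤ B + 2 := by
      calc ‖w - 2‖ ≤ ‖w‖ + ‖(2 : ℂ)‖ := norm_sub_le _ _
        _ ≤ B + 2 := by
            have h2c : ‖(2 : ℂ)‖ = 2 := by norm_num
            rw [h2c]; linarith
    have hre2 : (w - 2).re ≤ -1 + 2 * n := by
      rw [show (w - 2).re = w.re - 2 by simp [Complex.sub_re]]
      push_cast at hwre ⊢; linarith
    exact (hM' u hu (w - 2) hw2 hre2).trans (div_le_self hM'0.le hu)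

/-- let `a > 0`. For every `R > 0` there is `M > 0` with
`|C_a(u,w)| ≤ M/u` for all `u ≥ 1` and all `w` with `|w| ≤ R`. -/
theorem statement7 (a : ℝ) (ha : 0 < a) (C : ℝ → ℂ → ℂ) (hC : IsCaExtension a C)
    (R : ℝ) (hR : 0 < R) :
    ∃ M : ℝ, 0 < M ∧ ∀ u : ℝ, 1 ≤ u → ∀ w : ℂ, ‖w‖ ≤ R →
      ‖C u w‖ ≤ M / u := by
  set n : ℕ := ⌈R⌉₊ with hn
  have hn1 : (1 : ℝ) ≤ (n : ℝ) := by
    have : 0 < n := Nat.ceil_pos.2 hR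
    exact_mod_cast this
  have hnR : R ≤ -1 + 2 * (n : ℝ) := by
    have := Nat.le_ceil R
    linarith
  obtain ⟨M, hM0, hM⟩ := bound_ind ha hC n R hR
  refine ⟨M, hM0, fun u hu w hw => ?_⟩
  have h1 : ‖w‖ ≤ R := by exact hw
  have h2 : w.re ≤ -1 + 2 * (n : ℝ) := by
    calc w.re ≤ ‖w‖ := Complex.re_le_norm w
      _ ≤ R := hw
      _ ≤ _ := hnR
  have := hM u hu w h1 h2
  exact this
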